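/- Let (A, m) be an Artinian Gorenstein local ring with Dilworth number d(A). If a is an ideal of A with μ(a) = d(A), then τ(m a) = d(A). -/
import Mathlib


open scoped Classical in
/-- `dim_{A/m} (a/b)`: the dimension over the residue field `A/m` of the subquotient `a/b`
(realized as the image of the ideal `a` in `A/b`), for ideals `b ⊆ a` with `m·a ⊆ b`; junk
value `0` if `a/b` is not killed by `m`. -/
noncomputable def resQuotDim {A : Type*} [CommRing A] (m a b : Ideal A) : ℕ :=
  if h : Module.IsTorsionBySet A
      ↥(Submodule.restrictScalars A (a.map (Ideal.Quotient.mk b))) (m : Set A) then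
    letI := h.module
    Module.finrank (A ⧸ m) ↥(Submodule.restrictScalars A (a.map (Ideal.Quotient.mk b)))
  else 0

/-- `μ(a) = dim_{A/m} a/ma`, the minimal number of generators of the ideal `a`. -/
noncomputable def muL {A : Type*} [CommRing A] (m a : Ideal A) : ℕ :=
  resQuotDim m a (m * a)

/-- `τ(a) = dim_{A/m} (a :_A m)/a`, the type of the ideal `a`. -/
noncomputable def tauL {A : Type*} [CommRing A] (m a : Ideal A) : ℕ :=
  resQuotDim m (a.colon m) a


section AuxIW

open Module

variable {A : Type*} [CommRing A]

/-- If `m * c ≤ b`, the image of `c` in `A ⧸ b` is killed by `m`. -/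
lemma torsion_of_mul_le_IW (m c b : Ideal A) (h : m * c ≤ b) :
    Module.IsTorsionBySet A
      ↥(Submodule.restrictScalars A (c.map (Ideal.Quotient.mk b))) (m : Set A) := by
  rintro ⟨x, hx⟩ ⟨r, hr⟩
  obtain ⟨y, hy, rfl⟩ := Ideal.mem_map_iff_of_surjective _ Ideal.Quotient.mk_surjective |>.1 hx
  apply Subtype.ext
  show r • (Ideal.Quotient.mk b y) = 0
  have : r • (Ideal.Quotient.mk b y) = Ideal.Quotient.mk b (r * y) := rfl
  rw [this, Ideal.Quotient.eq_zero_iff_mem]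
  exact h (Ideal.mul_mem_mul hr hy)

lemma finite_aux_IW [IsArtinianRing A] (m c b : Ideal A) [m.IsMaximal]
    (t : Module.IsTorsionBySet A
      ↥(Submodule.restrictScalars A (c.map (Ideal.Quotient.mk b))) (m : Set A)) :
    letI := t.module
    Module.Finite (A ⧸ m) ↥(Submodule.restrictScalars A (c.map (Ideal.Quotient.mk b))) := by
  letI := t.module
  letI : Field (A ⧸ m) := Ideal.Quotient.field m
  haveI := Module.IsTorsionBySet.isScalarTower t (S := A)
  haveI : IsArtinian A ↥(Submodule.restrictScalars A (c.map (Ideal.Quotient.mk b))) :=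
    inferInstance
  haveI : IsArtinian (A ⧸ m) ↥(Submodule.restrictScalars A (c.map (Ideal.Quotient.mk b))) :=
    isArtinian_of_tower A this
  exact (IsSemisimpleModule.finite_tfae (R := A ⧸ m)
    (M := ↥(Submodule.restrictScalars A (c.map (Ideal.Quotient.mk b)))).out 0 2).mpr this

lemma resQuotDim_mono_IW [IsArtinianRing A] (m : Ideal A) [m.IsMaximal] {c₁ c₂ b : Ideal A}
    (h : c₁ ≤ c₂) (h₂ : m * c₂ ≤ b) : resQuotDim m c₁ b ≤ resQuotDim m c₂ b := by
  have h₁ : m * c₁ ≤ b := le_trans (Ideal.mul_mono_right h) h₂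
  have t₁ := torsion_of_mul_le_IW m c₁ b h₁
  have t₂ := torsion_of_mul_le_IW m c₂ b h₂
  unfold resQuotDim
  rw [dif_pos t₁, dif_pos t₂]
  letI := t₁.module
  letI := t₂.module
  letI : Field (A ⧸ m) := Ideal.Quotient.field m
  haveI := finite_aux_IW m c₂ b t₂
  have hmap : (c₁.map (Ideal.Quotient.mk b)) ≤ (c₂.map (Ideal.Quotient.mk b)) :=
    Ideal.map_mono h
  let f : ↥(Submodule.restrictScalars A (c₁.map (Ideal.Quotient.mk b))) →ₗ[A ⧸ m]
      ↥(Submodule.restrictScalars A (c₂.map (Ideal.Quotient.mk b))) :=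
    { toFun := fun x => ⟨x.1, hmap x.2⟩
      map_add' := fun _ _ => rfl
      map_smul' := fun r x => Quotient.inductionOn' r fun r => rfl }
  have hinj : Function.Injective f := by
    intro x y hxy
    have h' : (f x).1 = (f y).1 := congrArg Subtype.val hxy
    exact Subtype.ext h'
  exact LinearMap.finrank_le_finrank_of_injective hinj

lemma resQuotDim_anti_IW [IsArtinianRing A] (m : Ideal A) [m.IsMaximal] {c b₁ b₂ : Ideal A}
    (h : b₁ ≤ b₂) (hc : m * c ≤ b₁) : resQuotDim m c b₂ ≤ resQuotDim m c b₁ := by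
  have hc₂ : m * c ≤ b₂ := le_trans hc h
  have t₁ := torsion_of_mul_le_IW m c b₁ hc
  have t₂ := torsion_of_mul_le_IW m c b₂ hc₂
  unfold resQuotDim
  rw [dif_pos t₁, dif_pos t₂]
  letI := t₁.module
  letI := t₂.module
  letI : Field (A ⧸ m) := Ideal.Quotient.field m
  haveI := finite_aux_IW m c b₁ t₁
  let φ : (A ⧸ b₁) →ₗ[A] (A ⧸ b₂) :=
    Submodule.mapQ b₁ b₂ LinearMap.id (fun x hx => h hx)
  let g : ↥(Submodule.restrictScalars A (c.map (Ideal.Quotient.mk b₁))) →ₗ[A ⧸ m]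
      ↥(Submodule.restrictScalars A (c.map (Ideal.Quotient.mk b₂))) :=
    { toFun := fun x => ⟨φ x.1, by
        obtain ⟨y, hy, e⟩ :=
          Ideal.mem_map_iff_of_surjective _ Ideal.Quotient.mk_surjective |>.1 x.2
        rw [← e]
        exact Ideal.mem_map_of_mem _ hy⟩
      map_add' := fun x y => Subtype.ext (map_add φ _ _)
      map_smul' := fun r x => Quotient.inductionOn' r fun r => Subtype.ext (φ.map_smul r x.1) }
  have hsurj : Function.Surjective g := by
    rintro ⟨z, hz⟩
    obtain ⟨y, hy, rfl⟩ :=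
      Ideal.mem_map_iff_of_surjective _ Ideal.Quotient.mk_surjective |>.1 hz
    exact ⟨⟨Ideal.Quotient.mk b₁ y, Ideal.mem_map_of_mem _ hy⟩, Subtype.ext rfl⟩
  have hrange : LinearMap.range g = ⊤ := LinearMap.range_eq_top.mpr hsurj
  have h1 := g.finrank_range_le
  rwa [hrange, finrank_top] at h1

end AuxIW

/-- **(Ikeda–Watanabe.)**  Let `(A, m)` be an Artinian Gorenstein local ring (i.e.
`dim_{A/m} (0 :_A m) = 1`) with Dilworth number `d(A) = max{μ(a)}`.  If `μ(a) = d(A)` then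
`τ(m a) = d(A)`. -/
theorem tau_mul_maximalIdeal_of_mu_eq_dilworth
    {A : Type*} [CommRing A] [IsArtinianRing A] [IsLocalRing A]
    (m : Ideal A) (hm : m = IsLocalRing.maximalIdeal A)
    (hGor : tauL m (⊥ : Ideal A) = 1)
    (d : ℕ) (hd : IsGreatest {e : ℕ | ∃ a : Ideal A, muL m a = e} d)
    (a : Ideal A) (ha : muL m a = d) :
    tauL m (m * a) = d := by
  haveI : m.IsMaximal := hm ▸ IsLocalRing.maximalIdeal.isMaximal A
  have key1 : m * ((m * a).colon m) ≤ m * a := by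
    rw [Ideal.mul_le]
    intro r hr s hs
    rw [mul_comm r s]
    exact Submodule.mem_colon.mp hs r hr
  have ha_le : a ≤ (m * a).colon m := fun x hx =>
    Submodule.mem_colon.mpr fun p hp => by
      have : p * x ∈ m * a := Ideal.mul_mem_mul hp hx
      rwa [smul_eq_mul, mul_comm x p]
  refine le_antisymm ?_ ?_
  · calc tauL m (m * a) = resQuotDim m ((m * a).colon m) (m * a) := rfl
      _ ≤ resQuotDim m ((m * a).colon m) (m * ((m * a).colon m)) :=
          resQuotDim_anti_IW m key1 le_rfl
      _ = muL m ((m * a).colon m) := rfl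
      _ ≤ d := hd.2 ⟨_, rfl⟩
  · calc d = muL m a := ha.symm
      _ = resQuotDim m a (m * a) := rfl
      _ ≤ resQuotDim m ((m * a).colon m) (m * a) := resQuotDim_mono_IW m ha_le key1
      _ = tauL m (m * a) := rfl
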